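/- arXiv:1906.07731 — 6 statements merged into one kernel-verified Lean document; each statement's English description precedes it below -/
import Mathlib

section
/- Let d ≥ 1 and let Σ be a d × d diagonal complex matrix with nonnegative real diagonal entries σ_1, …, σ_d satisfying Σ_i σ_i² = 1. Then every unitary U admits a unitary V with U * Σ = Σ * Vᵀ (i.e., for every U in the unitary group there exists V in the unitary group satisfying this equation) if and only if Σ = (1/√d) • 1, i.e., all Schmidt coefficients are equal. -/
open Matrix

lemma permMatrix_entry {d : ℕ} (e : Equiv.Perm (Fin d)) (i j : Fin d) :
    e.permMatrix ℂ i j = if e i = j then 1 else 0 := by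
  simp [Equiv.Perm.permMatrix, PEquiv.toMatrix, Equiv.toPEquiv_apply, Option.mem_def]

lemma conjT_transpose_comm {d : ℕ} (A : Matrix (Fin d) (Fin d) ℂ) : (Aᵀ)ᴴ = (Aᴴ)ᵀ := rfl

lemma permMatrix_unitary {d : ℕ} (e : Equiv.Perm (Fin d)) :
    e.permMatrix ℂ ∈ Matrix.unitaryGroup (Fin d) ℂ := by
  rw [Matrix.mem_unitaryGroup_iff]
  have hstar : star (e.permMatrix ℂ) = (e.permMatrix ℂ)ᵀ := by
    ext i j
    simp [Matrix.star_apply, permMatrix_entry, apply_ite]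
  rw [hstar, ← PEquiv.toMatrix_symm, Equiv.Perm.permMatrix, ← PEquiv.toMatrix_trans,
    ← Equiv.toPEquiv_symm, ← Equiv.toPEquiv_trans]
  simp

lemma transpose_unitary {d : ℕ} {V : Matrix (Fin d) (Fin d) ℂ}
    (hV : V ∈ Matrix.unitaryGroup (Fin d) ℂ) : Vᵀ ∈ Matrix.unitaryGroup (Fin d) ℂ := by
  rw [Matrix.mem_unitaryGroup_iff]
  have h1 : Vᴴ * V = 1 := Matrix.mem_unitaryGroup_iff'.mp hV
  calc Vᵀ * star Vᵀ = Vᵀ * (Vᵀ)ᴴ := rfl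
    _ = Vᵀ * (Vᴴ)ᵀ := by rw [conjT_transpose_comm]
    _ = (Vᴴ * V)ᵀ := by rw [Matrix.transpose_mul]
    _ = 1 := by rw [h1, Matrix.transpose_one]

/-- For a normalized Schmidt-coefficient matrix `S = diagonal σ`
(with `σ_i ≥ 0` and `∑ σ_i² = 1`), every unitary `U` on subsystem `A` admits a unitary
related operation `V` on subsystem `B` (i.e. `U * S = S * Vᵀ`) iff the state is maximally
entangled, `S = (1/√d) • 1`. -/
theorem unitary_related_operation_iff_maximally_entangled
    {d : ℕ} (hd : 1 ≤ d) (σ : Fin d → ℝ)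
    (hσ : ∀ i, 0 ≤ σ i) (hnorm : ∑ i, σ i ^ 2 = 1)
    (S : Matrix (Fin d) (Fin d) ℂ) (hS : S = Matrix.diagonal (fun i => (σ i : ℂ))) :
    (∀ U ∈ Matrix.unitaryGroup (Fin d) ℂ,
        ∃ V ∈ Matrix.unitaryGroup (Fin d) ℂ, U * S = S * Vᵀ) ↔
      S = ((1 / Real.sqrt d : ℝ) : ℂ) • (1 : Matrix (Fin d) (Fin d) ℂ) := by
  constructor
  · intro h
    -- all Schmidt coefficients are equal
    have key : ∀ i j : Fin d, σ i = σ j := by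
      intro i j
      set e := Equiv.swap i j with he
      obtain ⟨V, hV, hUV⟩ := h (e.permMatrix ℂ) (permMatrix_unitary e)
      -- derive that permMatrix commutes with S * Sᴴ
      have hcomm : e.permMatrix ℂ * (S * Sᴴ) = (S * Sᴴ) * e.permMatrix ℂ := by
        have h1 : (e.permMatrix ℂ * S) * (e.permMatrix ℂ * S)ᴴ = (S * Vᵀ) * (S * Vᵀ)ᴴ := by
          rw [hUV]
        have hVV : Vᵀ * (Vᵀ)ᴴ = 1 :=
          Matrix.mem_unitaryGroup_iff.mp (transpose_unitary hV)
        have hUU : (e.permMatrix ℂ)ᴴ * e.permMatrix ℂ = 1 :=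
          Matrix.mem_unitaryGroup_iff'.mp (permMatrix_unitary e)
        have h2 : e.permMatrix ℂ * (S * Sᴴ) * (e.permMatrix ℂ)ᴴ = S * Sᴴ := by
          calc e.permMatrix ℂ * (S * Sᴴ) * (e.permMatrix ℂ)ᴴ
              = (e.permMatrix ℂ * S) * (e.permMatrix ℂ * S)ᴴ := by
                simp [Matrix.conjTranspose_mul, Matrix.mul_assoc]
            _ = (S * Vᵀ) * (S * Vᵀ)ᴴ := h1
            _ = S * (Vᵀ * (Vᵀ)ᴴ) * Sᴴ := by
                simp [Matrix.conjTranspose_mul, Matrix.mul_assoc]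
            _ = S * Sᴴ := by rw [hVV]; simp
        calc e.permMatrix ℂ * (S * Sᴴ)
            = e.permMatrix ℂ * (S * Sᴴ) * ((e.permMatrix ℂ)ᴴ * e.permMatrix ℂ) := by
              rw [hUU]; simp
          _ = (e.permMatrix ℂ * (S * Sᴴ) * (e.permMatrix ℂ)ᴴ) * e.permMatrix ℂ := by
              simp [Matrix.mul_assoc]
          _ = (S * Sᴴ) * e.permMatrix ℂ := by rw [h2]
      -- compare the (i, j) entries
      have hD : S * Sᴴ = Matrix.diagonal (fun k => ((σ k : ℂ) ^ 2)) := by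
        rw [hS, Matrix.diagonal_conjTranspose, Matrix.diagonal_mul_diagonal]
        ext k
        simp [sq, Complex.conj_ofReal]
      rw [hD] at hcomm
      have hentry := congrArg (fun M : Matrix (Fin d) (Fin d) ℂ => M i j) hcomm
      simp only [Matrix.mul_diagonal, Matrix.diagonal_mul, permMatrix_entry, he,
        Equiv.swap_apply_left, if_pos rfl, one_mul, mul_one] at hentry
      norm_num at hentry
      have hre : σ j ^ 2 = σ i ^ 2 := by exact_mod_cast hentry
      nlinarith [hσ i, hσ j]
    -- now compute the common value
    have i0 : Fin d := ⟨0, hd⟩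
    have hsum : (d : ℝ) * σ i0 ^ 2 = 1 := by
      rw [← hnorm]
      rw [Finset.sum_congr rfl (fun i _ => by rw [key i i0])]
      simp [mul_comm]
    have hdpos : (0 : ℝ) < d := by exact_mod_cast hd
    have hσ0 : σ i0 = 1 / Real.sqrt d := by
      have hsq : σ i0 ^ 2 = 1 / d := by field_simp at hsum ⊢; linarith
      have h1 : σ i0 = Real.sqrt (1 / d) := by
        rw [← Real.sqrt_sq (hσ i0), hsq]
      rw [h1, one_div, one_div, Real.sqrt_inv]
    ext i j
    rw [hS]
    by_cases hij : i = j
    · subst hij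
      simp [Matrix.diagonal_apply_eq, key i i0, hσ0]
    · simp [Matrix.diagonal_apply_ne _ hij, Matrix.one_apply_ne hij, hij]
  · intro hmax U hU
    refine ⟨Uᵀ, transpose_unitary hU, ?_⟩
    rw [hmax, Matrix.transpose_transpose]
    simp [Matrix.smul_mul, Matrix.mul_smul]
end

section
/- Let Σ be a d × d diagonal complex matrix with strictly positive real diagonal entries. If for every unitary d × d matrix U the matrix Σ * Uᵀ * Σ⁻¹ is unitary, then there exists a positive real constant c such that Σ = c • 1. -/
open Matrix

/-- If `S` is diagonal with strictly positive real diagonal entries and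
`S * Uᵀ * S⁻¹` is unitary for every unitary `U`, then `S` is a positive multiple of the
identity (Schur's first lemma argument). -/
theorem related_unitary_for_all_unitaries_implies_scalar
    {d : ℕ} (σ : Fin d → ℝ) (hσ : ∀ i, 0 < σ i)
    (S : Matrix (Fin d) (Fin d) ℂ) (hS : S = Matrix.diagonal (fun i => (σ i : ℂ)))
    (h : ∀ U ∈ Matrix.unitaryGroup (Fin d) ℂ,
        S * Uᵀ * S⁻¹ ∈ Matrix.unitaryGroup (Fin d) ℂ) :
    ∃ c : ℝ, 0 < c ∧ S = (c : ℂ) • (1 : Matrix (Fin d) (Fin d) ℂ) := by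
  rcases Nat.eq_zero_or_pos d with hd | hd
  · subst hd
    exact ⟨1, one_pos, Subsingleton.elim _ _⟩
  · have key : ∀ i j : Fin d, σ i = σ j := by
      intro i j
      set e := Equiv.swap i j with he
      set U : Matrix (Fin d) (Fin d) ℂ := Matrix.of fun a b => if b = e a then 1 else 0 with hU
      have hUmem : U ∈ Matrix.unitaryGroup (Fin d) ℂ := by
        rw [Matrix.mem_unitaryGroup_iff]
        ext a b
        simp [hU, Matrix.mul_apply, Matrix.one_apply, apply_ite (star : ℂ → ℂ),
          Finset.sum_ite_eq', e.injective.eq_iff, eq_comm]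
      have hV := (Matrix.mem_unitaryGroup_iff').mp (h U hUmem)
      have hSinv : S⁻¹ = Matrix.diagonal (fun i => ((σ i : ℂ))⁻¹) := by
        apply Matrix.inv_eq_right_inv
        rw [hS]
        rw [Matrix.diagonal_mul_diagonal]
        have hfun : (fun k => (σ k : ℂ) * ((σ k : ℂ))⁻¹) = fun _ => (1 : ℂ) :=
          funext fun k => mul_inv_cancel₀ (by exact_mod_cast (hσ k).ne')
        rw [hfun, Matrix.diagonal_one]
      have hVjj := congrFun (congrFun hV j) j
      rw [hSinv, hS] at hVjj
      have hent : ∀ k : Fin d,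
          (Matrix.diagonal (fun i => (σ i : ℂ)) * Uᵀ * Matrix.diagonal (fun i => ((σ i : ℂ))⁻¹)) k j
            = if k = i then (σ i : ℂ) * ((σ j : ℂ))⁻¹ else 0 := by
        intro k
        simp only [Matrix.diagonal_mul, Matrix.mul_diagonal, Matrix.transpose_apply, hU,
          Matrix.of_apply, he, Equiv.swap_apply_right]
        by_cases hk : k = i <;> simp [hk]
      rw [Matrix.mul_apply] at hVjj
      set z : ℂ := (σ i : ℂ) * ((σ j : ℂ))⁻¹ with hz0
      have hVjj' : (∑ k, star (if k = i then z else 0) * (if k = i then z else 0)) = 1 := by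
        rw [Matrix.one_apply_eq] at hVjj
        rw [← hVjj]
        exact Finset.sum_congr rfl fun k _ => by rw [Matrix.star_apply, hent k]
      simp only [apply_ite (star : ℂ → ℂ), star_zero, ite_mul, zero_mul, mul_ite, mul_zero,
        Finset.sum_ite_eq', Finset.mem_univ, if_true] at hVjj'
      have hVjj := hVjj'
      have hj := (hσ j).ne'
      have hi := (hσ i).ne'
      have hre : ((σ i / σ j : ℝ) : ℂ) * ((σ i / σ j : ℝ) : ℂ) = 1 := by
        push_cast
        rw [div_mul_div_comm]
        have h2 : star z = z := by
          simp [hz0, star_mul', mul_comm]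
        rw [h2] at hVjj
        rw [hz0] at hVjj
        rw [← hVjj]
        ring
      have : (σ i / σ j) * (σ i / σ j) = 1 := by exact_mod_cast hre
      have hpos : 0 < σ i / σ j := div_pos (hσ i) (hσ j)
      have : σ i / σ j = 1 := by nlinarith
      exact (div_eq_one_iff_eq hj).mp this
    set c := σ ⟨0, hd⟩ with hc
    refine ⟨c, hσ _, ?_⟩
    rw [hS]
    ext a b
    by_cases hab : a = b <;>
      simp [Matrix.diagonal_apply, Matrix.one_apply, hab, key b ⟨0, hd⟩, hc]
end

section
/- Let C be a nonzero d_A × d_B complex matrix with rank C < d_B. Then there exists a d_B × d_B complex matrix V such that for every d_A × d_A complex matrix U, U * C ≠ C * Vᵀ. (An action on the larger subsystem B cannot, in general, be replicated by any action on the smaller subsystem A.) -/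
open Matrix

/-- If the coefficient matrix `C` is nonzero and its rank is less than `d_B`,
then there is a local operation `V` on the larger subsystem `B` whose action cannot be
replicated by any local operation `U` on subsystem `A`. -/
theorem operation_on_larger_subsystem_not_replicable
    {dA dB : ℕ} (C : Matrix (Fin dA) (Fin dB) ℂ)
    (hC : C ≠ 0) (hrank : C.rank < dB) :
    ∃ V : Matrix (Fin dB) (Fin dB) ℂ,
      ∀ U : Matrix (Fin dA) (Fin dA) ℂ, U * C ≠ C * Vᵀ := by
  -- nontrivial kernel vector v
  have hker : LinearMap.ker C.mulVecLin ≠ ⊥ := by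
    intro h
    have h1 := LinearMap.finrank_range_add_finrank_ker C.mulVecLin
    rw [h, finrank_bot] at h1
    have : C.rank = dB := by
      simpa [Matrix.rank, Module.finrank_pi] using h1
    omega
  obtain ⟨v, hv, hv0⟩ := Submodule.exists_mem_ne_zero_of_ne_bot hker
  rw [LinearMap.mem_ker] at hv
  have hv' : C.mulVec v = 0 := by simpa [Matrix.mulVecLin_apply] using hv
  obtain ⟨i, hi⟩ := Function.ne_iff.mp hv0
  have hi' : v i ≠ 0 := by simpa using hi
  -- w with C.mulVec w ≠ 0
  have hCw : ∃ w : Fin dB → ℂ, C.mulVec w ≠ 0 := by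
    by_contra h
    push_neg at h
    apply hC
    ext j k
    have := congrFun (h (Pi.single k 1)) j
    simpa [Matrix.mulVec_single] using this
  obtain ⟨w, hw⟩ := hCw
  refine ⟨(Matrix.of fun j k => if k = i then w j / v i else 0)ᵀ, ?_⟩
  intro U hU
  have hVv : (Matrix.of fun j k => if k = i then w j / v i else 0).mulVec v = w := by
    ext j
    simp [Matrix.mulVec, dotProduct, Finset.sum_ite_eq', div_mul_cancel₀ _ hi']
  have h1 : (U * C).mulVec v = 0 := by
    rw [← Matrix.mulVec_mulVec, hv', Matrix.mulVec_zero]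
  have h2 : (C * (Matrix.of fun j k => if k = i then w j / v i else 0)ᵀᵀ).mulVec v = C.mulVec w := by
    rw [Matrix.transpose_transpose, ← Matrix.mulVec_mulVec, hVv]
  rw [hU, h2] at h1
  exact hw h1
end

section
/- Let C be an invertible d × d complex matrix, let ψ : Matrix (Fin d × Fin d) (Fin 1) ℂ be the column vector with ψ (i, j) 0 = C i j, and let ρ = ψ * ψᴴ. For any finite family of d × d matrices K_l, define J_l = (C⁻¹ * K_l * C)ᵀ. Then Σ_l (K_l ⊗ₖ 1) * ρ * (K_l ⊗ₖ 1)ᴴ = Σ_l (1 ⊗ₖ J_l) * ρ * (1 ⊗ₖ J_l)ᴴ, where ⊗ₖ denotes the Kronecker product. -/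
open Matrix Kronecker

/-- For a fully entangled pure state of two `d`-dimensional qudits with
invertible coefficient matrix `C`, represented by the column vector `ψ` with
`ψ (i,j) 0 = C i j` and density matrix `ρ = ψ * ψᴴ`, any Kraus operators `K_l` on
subsystem `A` are equivalent to the related Kraus operators `J_l = (C⁻¹ * K_l * C)ᵀ`
on subsystem `B`:
`∑_l (K_l ⊗ₖ 1) ρ (K_l ⊗ₖ 1)ᴴ = ∑_l (1 ⊗ₖ J_l) ρ (1 ⊗ₖ J_l)ᴴ`. -/
theorem related_kraus_operators_same_action
    {d n : ℕ} (C : Matrix (Fin d) (Fin d) ℂ) (hC : IsUnit C)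
    (ψ : Matrix (Fin d × Fin d) (Fin 1) ℂ)
    (hψ : ∀ i j, ψ (i, j) 0 = C i j)
    (ρ : Matrix (Fin d × Fin d) (Fin d × Fin d) ℂ) (hρ : ρ = ψ * ψᴴ)
    (K : Fin n → Matrix (Fin d) (Fin d) ℂ)
    (J : Fin n → Matrix (Fin d) (Fin d) ℂ)
    (hJ : ∀ l, J l = (C⁻¹ * K l * C)ᵀ) :
    ∑ l, (K l ⊗ₖ (1 : Matrix (Fin d) (Fin d) ℂ)) * ρ *
        (K l ⊗ₖ (1 : Matrix (Fin d) (Fin d) ℂ))ᴴ =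
      ∑ l, ((1 : Matrix (Fin d) (Fin d) ℂ) ⊗ₖ J l) * ρ *
        ((1 : Matrix (Fin d) (Fin d) ℂ) ⊗ₖ J l)ᴴ := by
  have key : ∀ l, (K l ⊗ₖ (1 : Matrix (Fin d) (Fin d) ℂ)) * ψ =
      ((1 : Matrix (Fin d) (Fin d) ℂ) ⊗ₖ J l) * ψ := by
    intro l
    ext ⟨i, j⟩ k
    fin_cases k
    have h1 : ((K l ⊗ₖ (1 : Matrix (Fin d) (Fin d) ℂ)) * ψ) (i, j) 0 = (K l * C) i j := by
      simp only [mul_apply, Fintype.sum_prod_type, kroneckerMap_apply, one_apply]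
      rw [Finset.sum_comm]
      simp [hψ, Finset.sum_ite_eq', mul_comm]
    have h2 : (((1 : Matrix (Fin d) (Fin d) ℂ) ⊗ₖ J l) * ψ) (i, j) 0 = (C * (J l)ᵀ) i j := by
      simp only [mul_apply, Fintype.sum_prod_type, kroneckerMap_apply, one_apply, transpose_apply]
      simp [hψ, Finset.sum_ite_eq', mul_comm]
    have h3 : C * (J l)ᵀ = K l * C := by
      rw [hJ l, transpose_transpose, ← mul_assoc, ← mul_assoc,
        Matrix.mul_nonsing_inv C (by rwa [← isUnit_iff_isUnit_det]), one_mul]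
    simp [h1, h2, h3]
  refine Finset.sum_congr rfl fun l _ => ?_
  rw [hρ, ← Matrix.mul_assoc, key l, Matrix.mul_assoc, ← conjTranspose_mul, key l, conjTranspose_mul,
    ← Matrix.mul_assoc, Matrix.mul_assoc _ ψ ψᴴ]
end

section
/- For any d × d complex matrix X, the value Tr √(Xᴴ * X) (the trace of the positive semidefinite square root of Xᴴ * X, i.e., the trace norm of X) is the greatest element of the set { |Tr (V * X)| : V ∈ Matrix.unitaryGroup (Fin d) ℂ }; that is, |Tr(V * X)| ≤ Tr √(XᴴX) for every unitary V, and there exists a unitary V attaining equality. -/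
open Matrix ComplexOrder

/-- The positive semidefinite square root of a positive semidefinite matrix
(the definition Mathlib had in December 2024, since removed from Mathlib). -/
noncomputable def Matrix.PosSemidef.sqrt {n : Type*} [Fintype n] [DecidableEq n] {𝕜 : Type*}
    [RCLike 𝕜] {A : Matrix n n 𝕜} (hA : A.PosSemidef) : Matrix n n 𝕜 :=
  (hA.1.eigenvectorUnitary : Matrix n n 𝕜) * diagonal ((↑) ∘ (√·) ∘ hA.1.eigenvalues) *
    (star (hA.1.eigenvectorUnitary : Matrix n n 𝕜))

/-- The trace norm `Tr √(Xᴴ X)` of a square complex matrix `X` is the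
greatest value of `|Tr (V * X)|` over unitary matrices `V`; the maximum is attained
by the inverse of the unitary factor in the polar decomposition of `X`. -/
theorem trace_norm_isGreatest_abs_trace_unitary_mul
    {d : ℕ} (X : Matrix (Fin d) (Fin d) ℂ) :
    IsGreatest
      {r : ℝ | ∃ V ∈ Matrix.unitaryGroup (Fin d) ℂ, r = ‖Matrix.trace (V * X)‖}
      ((Matrix.trace ((Matrix.posSemidef_conjTranspose_mul_self X).sqrt)).re) := by
  classical
  have hH := Matrix.posSemidef_conjTranspose_mul_self X
  set hHerm := hH.1 with hHerm_def
  set lam : Fin d → ℝ := hHerm.eigenvalues with hlam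
  have hlam0 : ∀ i, 0 ≤ lam i := hH.eigenvalues_nonneg
  set sig : Fin d → ℝ := fun i => Real.sqrt (lam i) with hsig
  have hsig0 : ∀ i, 0 ≤ sig i := fun i => Real.sqrt_nonneg _
  set U : Matrix (Fin d) (Fin d) ℂ := (hHerm.eigenvectorUnitary : Matrix (Fin d) (Fin d) ℂ) with hU
  have hUmem : U ∈ Matrix.unitaryGroup (Fin d) ℂ := hHerm.eigenvectorUnitary.2
  -- trace of sqrt
  have htr : (Matrix.trace hH.sqrt).re = ∑ i, sig i := by
    have : hH.sqrt = U * Matrix.diagonal ((↑) ∘ Real.sqrt ∘ lam) * star U := rfl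
    rw [this, Matrix.trace_mul_cycle,
      (Matrix.mem_unitaryGroup_iff'.mp hUmem), Matrix.one_mul, Matrix.trace_diagonal]
    simp [Complex.ofReal_re]; rfl
  set Y : Matrix (Fin d) (Fin d) ℂ := X * U with hYdef
  have hYY : Yᴴ * Y = Matrix.diagonal (fun i => (lam i : ℂ)) := by
    have := hHerm.conjStarAlgAut_star_eigenvectorUnitary
    simp only [Unitary.conjStarAlgAut_star_apply, Unitary.coe_star] at this
    rw [hYdef, Matrix.conjTranspose_mul]
    calc Uᴴ * Xᴴ * (X * U) = star U * (Xᴴ * X) * U := by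
          rw [Matrix.star_eq_conjTranspose]; noncomm_ring
      _ = Matrix.diagonal (fun i => (lam i : ℂ)) := by
          rw [this]; rfl
  -- entries of Yᴴ Y as sums
  have hYYent : ∀ i j, (∑ k, (starRingEnd ℂ) (Y k i) * Y k j)
      = Matrix.diagonal (fun i => (lam i : ℂ)) i j := by
    intro i j
    rw [← hYY, Matrix.mul_apply]
    simp [Matrix.conjTranspose_apply]
  -- columns with zero eigenvalue vanish
  have hYzero : ∀ j, lam j = 0 → ∀ i, Y i j = 0 := by
    intro j hj i
    have h0 : ∑ k, Complex.normSq (Y k j) = 0 := by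
      have := hYYent j j
      rw [Matrix.diagonal_apply_eq, hj] at this
      have h1 : (∑ k, (Complex.normSq (Y k j) : ℂ)) = 0 := by
        calc (∑ k, (Complex.normSq (Y k j) : ℂ))
            = ∑ k, (starRingEnd ℂ) (Y k j) * Y k j := by
              refine Finset.sum_congr rfl fun k _ => ?_
              rw [mul_comm, Complex.mul_conj]
          _ = 0 := by rw [this]; norm_num
      exact_mod_cast h1
    have := (Finset.sum_eq_zero_iff_of_nonneg
      (fun k _ => Complex.normSq_nonneg (Y k j))).mp h0 i (Finset.mem_univ i)
    exact Complex.normSq_eq_zero.mp this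
  -- columns of Y as Euclidean vectors
  set y : Fin d → EuclideanSpace ℂ (Fin d) := fun j => WithLp.toLp 2 (fun i => Y i j) with hy
  have hinner : ∀ i j, (inner ℂ (y i) (y j) : ℂ)
      = Matrix.diagonal (fun i => (lam i : ℂ)) i j := by
    intro i j
    rw [← hYYent i j]
    simp [PiLp.inner_apply, RCLike.inner_apply, hy, mul_comm]
  set v : Fin d → EuclideanSpace ℂ (Fin d) := fun j => ((sig j : ℂ))⁻¹ • y j with hv
  have hsigpos : ∀ j, lam j ≠ 0 → 0 < sig j := by
    intro j hj
    exact Real.sqrt_pos.mpr (lt_of_le_of_ne (hlam0 j) (Ne.symm hj))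
  have horth : Orthonormal ℂ (Set.restrict {j | lam j ≠ 0} v) := by
    rw [orthonormal_iff_ite]
    rintro ⟨i, hi⟩ ⟨j, hj⟩
    simp only [Set.restrict_apply, hv]
    show inner ℂ (((sig i : ℂ))⁻¹ • y i) (((sig j : ℂ))⁻¹ • y j) = _
    rw [inner_smul_left, inner_smul_right, hinner i j]
    rcases eq_or_ne i j with rfl | hij
    · rw [Matrix.diagonal_apply_eq]
      simp only [Subtype.mk.injEq, if_pos rfl]
      rw [map_inv₀, Complex.conj_ofReal]
      rw [← Complex.ofReal_inv, ← Complex.ofReal_mul, ← Complex.ofReal_mul]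
      norm_cast
      have hσ : sig i ≠ 0 := ne_of_gt (hsigpos i hi)
      field_simp
      simp [hsig, Real.sq_sqrt (hlam0 i)]
    · rw [Matrix.diagonal_apply_ne _ hij]
      simp [Subtype.mk.injEq, hij]
  obtain ⟨b, hb⟩ := horth.exists_orthonormalBasis_extension_of_card_eq
    (by simp [finrank_euclideanSpace])
  set W : Matrix (Fin d) (Fin d) ℂ :=
    (EuclideanSpace.basisFun (Fin d) ℂ).toBasis.toMatrix b.toBasis with hWdef
  have hWmem : W ∈ Matrix.unitaryGroup (Fin d) ℂ :=
    (EuclideanSpace.basisFun (Fin d) ℂ).toMatrix_orthonormalBasis_mem_unitary b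
  have hWapp : ∀ i j, W i j = b j i := fun i j => rfl
  set D : Matrix (Fin d) (Fin d) ℂ := Matrix.diagonal (fun j => (sig j : ℂ)) with hD
  have hYW : Y = W * D := by
    ext i j
    rw [hD, Matrix.mul_diagonal]
    by_cases hj : lam j = 0
    · have : sig j = 0 := by rw [hsig]; simp [hj]
      rw [hWapp, this, hYzero j hj i]
      simp
    · have hbj : b j = v j := hb j hj
      have hσ : (sig j : ℂ) ≠ 0 := by
        exact_mod_cast ne_of_gt (hsigpos j hj)
      rw [hWapp, hbj, hv]
      show Y i j = ((sig j : ℂ))⁻¹ • (y j) i * (sig j : ℂ)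
      rw [hy]
      simp only [smul_eq_mul]
      field_simp
  have hX : X = W * D * star U := by
    have h1 : X * (U * star U) = X := by
      rw [Matrix.mem_unitaryGroup_iff.mp hUmem, Matrix.mul_one]
    calc X = X * (U * star U) := h1.symm
      _ = Y * star U := by rw [← Matrix.mul_assoc]
      _ = W * D * star U := by rw [hYW]
  -- diagonal entries of a unitary have norm at most one
  have hentry : ∀ (M : Matrix (Fin d) (Fin d) ℂ),
      M ∈ Matrix.unitaryGroup (Fin d) ℂ → ∀ i, ‖M i i‖ ≤ 1 := by
    intro M hM i
    have h1 : (M * star M) i i = 1 := by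
      rw [Matrix.mem_unitaryGroup_iff.mp hM]; simp
    have h2 : ∑ k, Complex.normSq (M i k) = 1 := by
      have h3 : (∑ k, (Complex.normSq (M i k) : ℂ)) = 1 := by
        rw [← h1, Matrix.mul_apply]
        exact Finset.sum_congr rfl fun k _ => by
          rw [Matrix.star_apply, Complex.star_def, Complex.mul_conj]
      exact_mod_cast h3
    have h4 : Complex.normSq (M i i) ≤ 1 :=
      h2 ▸ Finset.single_le_sum (fun k _ => Complex.normSq_nonneg (M i k))
        (Finset.mem_univ i)
    have h5 : ‖M i i‖ ^ 2 ≤ 1 := by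
      rw [Complex.sq_norm]; exact h4
    nlinarith [norm_nonneg (M i i)]
  constructor
  · -- attained at U * star W
    refine ⟨U * star W, mul_mem hUmem (Unitary.star_mem hWmem), ?_⟩
    have hcalc : (U * star W) * X = U * D * star U := by
      rw [hX, ← Matrix.mul_assoc, ← Matrix.mul_assoc, Matrix.mul_assoc U (star W) W,
        Matrix.mem_unitaryGroup_iff'.mp hWmem, Matrix.mul_one]
    rw [hcalc, Matrix.trace_mul_cycle, Matrix.mem_unitaryGroup_iff'.mp hUmem,
      Matrix.one_mul, Matrix.trace_diagonal, htr]
    rw [show (∑ i, ((sig i : ℂ))) = ((∑ i, sig i : ℝ) : ℂ) by push_cast; ring]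
    rw [Complex.norm_real, Real.norm_eq_abs,
      abs_of_nonneg (Finset.sum_nonneg fun i _ => hsig0 i)]
  · rintro r ⟨V, hV, rfl⟩
    set M : Matrix (Fin d) (Fin d) ℂ := star U * V * W with hM
    have hMmem : M ∈ Matrix.unitaryGroup (Fin d) ℂ :=
      mul_mem (mul_mem (Unitary.star_mem hUmem) hV) hWmem
    have htrace : Matrix.trace (V * X) = Matrix.trace (M * D) := by
      rw [hX, hM]
      rw [← Matrix.mul_assoc, ← Matrix.mul_assoc, Matrix.trace_mul_comm,
        ← Matrix.mul_assoc, ← Matrix.mul_assoc]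
    rw [htrace, htr]
    have hdiag : Matrix.trace (M * D) = ∑ i, M i i * (sig i : ℂ) := by
      rw [Matrix.trace]
      exact Finset.sum_congr rfl fun i _ => by
        rw [Matrix.diag_apply, hD, Matrix.mul_diagonal]
    rw [hdiag]
    calc ‖∑ i, M i i * (sig i : ℂ)‖ ≤ ∑ i, ‖M i i * (sig i : ℂ)‖ :=
          norm_sum_le _ _
      _ ≤ ∑ i, sig i := by
          refine Finset.sum_le_sum fun i _ => ?_
          rw [norm_mul, Complex.norm_real, Real.norm_eq_abs, abs_of_nonneg (hsig0 i)]
          calc ‖M i i‖ * sig i ≤ 1 * sig i :=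
                mul_le_mul_of_nonneg_right (hentry M hMmem i) (hsig0 i)
            _ = sig i := one_mul _
end

section
/- Let μ be the Haar probability measure on Matrix.unitaryGroup (Fin d_A) ℂ and define, for a (d_A·d_B) × (d_A·d_B) complex matrix ρ (indexed by Fin d_A × Fin d_B), the symmetry of entanglement E_S(ρ) = ∫ (sup over unitary V ∈ Matrix.unitaryGroup (Fin d_B) ℂ of |Tr ((Uᴴ ⊗ₖ V) * ρ)|) dμ(U). Then E_S is convex: for nonnegative reals p_1, …, p_n and matrices ρ_1, …, ρ_n, E_S(Σ_i p_i • ρ_i) ≤ Σ_i p_i · E_S(ρ_i). -/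
open Matrix Kronecker MeasureTheory

set_option maxHeartbeats 1600000

section Aux

/-- The unitary group of a finite-dimensional complex matrix algebra is compact. -/
instance unitaryGroup_compactSpace (d : ℕ) :
    CompactSpace (Matrix.unitaryGroup (Fin d) ℂ) := by
  have hsub : (Matrix.unitaryGroup (Fin d) ℂ : Set (Matrix (Fin d) (Fin d) ℂ)) ⊆
      Set.univ.pi fun _ : Fin d => Set.univ.pi fun _ : Fin d => Metric.closedBall (0 : ℂ) 1 := by
    intro A hA
    refine Set.mem_univ_pi.mpr fun i => Set.mem_univ_pi.mpr fun j => ?_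
    rw [Metric.mem_closedBall, dist_zero_right]
    exact entry_norm_bound_of_unitary hA i j
  have hclosed : IsClosed (Matrix.unitaryGroup (Fin d) ℂ : Set (Matrix (Fin d) (Fin d) ℂ)) := by
    have : (Matrix.unitaryGroup (Fin d) ℂ : Set (Matrix (Fin d) (Fin d) ℂ)) =
        (fun A : Matrix (Fin d) (Fin d) ℂ => A * star A) ⁻¹' {1} := by
      ext A
      simp [Matrix.mem_unitaryGroup_iff]
    rw [this]
    exact isClosed_singleton.preimage (continuous_id.matrix_mul continuous_star)
  exact isCompact_iff_compactSpace.mp ((isCompact_univ_pi fun _ => isCompact_univ_pi fun _ =>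
    isCompact_closedBall (0 : ℂ) 1).of_isClosed_subset hclosed hsub)

variable {dA dB : ℕ}

/-- Joint continuity of the trace functional. -/
lemma cont_joint (A : Matrix (Fin dA × Fin dB) (Fin dA × Fin dB) ℂ) :
    Continuous fun W : Matrix.unitaryGroup (Fin dA) ℂ × Matrix.unitaryGroup (Fin dB) ℂ =>
      Matrix.trace (((W.1 : Matrix (Fin dA) (Fin dA) ℂ)ᴴ ⊗ₖ
        (W.2 : Matrix (Fin dB) (Fin dB) ℂ)) * A) := by
  have h1 : Continuous fun W : Matrix.unitaryGroup (Fin dA) ℂ × Matrix.unitaryGroup (Fin dB) ℂ =>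
      (W.1 : Matrix (Fin dA) (Fin dA) ℂ) := continuous_subtype_val.comp continuous_fst
  have h2 : Continuous fun W : Matrix.unitaryGroup (Fin dA) ℂ × Matrix.unitaryGroup (Fin dB) ℂ =>
      (W.2 : Matrix (Fin dB) (Fin dB) ℂ) := continuous_subtype_val.comp continuous_snd
  have hk : Continuous fun W : Matrix.unitaryGroup (Fin dA) ℂ × Matrix.unitaryGroup (Fin dB) ℂ =>
      ((W.1 : Matrix (Fin dA) (Fin dA) ℂ)ᴴ ⊗ₖ (W.2 : Matrix (Fin dB) (Fin dB) ℂ)) := by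
    apply continuous_matrix
    intro i j
    simp only [Matrix.kroneckerMap_apply]
    exact (h1.matrix_conjTranspose.matrix_elem i.1 j.1).mul (h2.matrix_elem i.2 j.2)
  exact (hk.matrix_mul continuous_const).matrix_trace

/-- Continuity of the inner supremum as a function of `U`. -/
lemma cont_sup (A : Matrix (Fin dA × Fin dB) (Fin dA × Fin dB) ℂ) :
    Continuous fun U : Matrix.unitaryGroup (Fin dA) ℂ =>
      ⨆ V : Matrix.unitaryGroup (Fin dB) ℂ,
        ‖Matrix.trace (((U : Matrix (Fin dA) (Fin dA) ℂ)ᴴ ⊗ₖ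
          (V : Matrix (Fin dB) (Fin dB) ℂ)) * A)‖ := by
  let Φ : C(Matrix.unitaryGroup (Fin dA) ℂ × Matrix.unitaryGroup (Fin dB) ℂ, ℂ) :=
    ⟨_, cont_joint A⟩
  have key : ∀ U : Matrix.unitaryGroup (Fin dA) ℂ,
      (⨆ V : Matrix.unitaryGroup (Fin dB) ℂ,
        ‖Matrix.trace (((U : Matrix (Fin dA) (Fin dA) ℂ)ᴴ ⊗ₖ
          (V : Matrix (Fin dB) (Fin dB) ℂ)) * A)‖) = ‖Φ.curry U‖ := by
    intro U
    rw [ContinuousMap.norm_eq_iSup_norm]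
    rfl
  simpa only [key, Function.comp_def] using (continuous_norm.comp Φ.curry.continuous)

/-- Continuity in `V` for fixed `U`. -/
lemma cont_slice (A : Matrix (Fin dA × Fin dB) (Fin dA × Fin dB) ℂ)
    (U : Matrix.unitaryGroup (Fin dA) ℂ) :
    Continuous fun V : Matrix.unitaryGroup (Fin dB) ℂ =>
      ‖Matrix.trace (((U : Matrix (Fin dA) (Fin dA) ℂ)ᴴ ⊗ₖ
        (V : Matrix (Fin dB) (Fin dB) ℂ)) * A)‖ := by
  have h2 : Continuous fun V : Matrix.unitaryGroup (Fin dB) ℂ =>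
      (V : Matrix (Fin dB) (Fin dB) ℂ) := continuous_subtype_val
  have hk : Continuous fun V : Matrix.unitaryGroup (Fin dB) ℂ =>
      ((U : Matrix (Fin dA) (Fin dA) ℂ)ᴴ ⊗ₖ (V : Matrix (Fin dB) (Fin dB) ℂ)) := by
    apply continuous_matrix
    intro i j
    simp only [Matrix.kroneckerMap_apply]
    exact continuous_const.mul (h2.matrix_elem i.2 j.2)
  exact ((hk.matrix_mul continuous_const).matrix_trace).norm

/-- Boundedness of the trace functional over the unitary group. -/
lemma bdd_slice (A : Matrix (Fin dA × Fin dB) (Fin dA × Fin dB) ℂ)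
    (U : Matrix.unitaryGroup (Fin dA) ℂ) :
    BddAbove (Set.range fun V : Matrix.unitaryGroup (Fin dB) ℂ =>
      ‖Matrix.trace (((U : Matrix (Fin dA) (Fin dA) ℂ)ᴴ ⊗ₖ
        (V : Matrix (Fin dB) (Fin dB) ℂ)) * A)‖) :=
  (isCompact_range (cont_slice A U)).bddAbove

end Aux

/-- The symmetry of entanglement
`E_S(ρ) = ∫ sup_V |Tr((Uᴴ ⊗ₖ V) ρ)| dμ(U)`, with `μ` the Haar probability measure on
the unitary group of subsystem `A`, is convex:
`E_S(∑ p_i ρ_i) ≤ ∑ p_i E_S(ρ_i)` for nonnegative weights `p_i`. -/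
theorem symmetry_of_entanglement_convex
    {dA dB n : ℕ}
    [MeasurableSpace (Matrix.unitaryGroup (Fin dA) ℂ)]
    [BorelSpace (Matrix.unitaryGroup (Fin dA) ℂ)]
    (μ : Measure (Matrix.unitaryGroup (Fin dA) ℂ))
    [μ.IsHaarMeasure] [IsProbabilityMeasure μ]
    (ρ : Fin n → Matrix (Fin dA × Fin dB) (Fin dA × Fin dB) ℂ)
    (p : Fin n → ℝ) (hp : ∀ i, 0 ≤ p i) :
    (∫ U : Matrix.unitaryGroup (Fin dA) ℂ,
        (⨆ V : Matrix.unitaryGroup (Fin dB) ℂ,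
          ‖Matrix.trace (((U : Matrix (Fin dA) (Fin dA) ℂ)ᴴ ⊗ₖ
            (V : Matrix (Fin dB) (Fin dB) ℂ)) * (∑ i, (p i : ℂ) • ρ i))‖) ∂μ) ≤
      ∑ i, p i *
        (∫ U : Matrix.unitaryGroup (Fin dA) ℂ,
          (⨆ V : Matrix.unitaryGroup (Fin dB) ℂ,
            ‖Matrix.trace (((U : Matrix (Fin dA) (Fin dA) ℂ)ᴴ ⊗ₖ
              (V : Matrix (Fin dB) (Fin dB) ℂ)) * ρ i)‖) ∂μ) := by
  -- abbreviations
  let g : Fin n → Matrix.unitaryGroup (Fin dA) ℂ → ℝ := fun i U =>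
    ⨆ V : Matrix.unitaryGroup (Fin dB) ℂ,
      ‖Matrix.trace (((U : Matrix (Fin dA) (Fin dA) ℂ)ᴴ ⊗ₖ
        (V : Matrix (Fin dB) (Fin dB) ℂ)) * ρ i)‖
  have hgint : ∀ i, Integrable (g i) μ := fun i => (cont_sup (ρ i)).integrable_of_hasCompactSupport
    (IsCompact.of_isClosed_subset isCompact_univ (isClosed_tsupport _) (Set.subset_univ _))
  -- pointwise inequality
  have hpt : ∀ U : Matrix.unitaryGroup (Fin dA) ℂ,
      (⨆ V : Matrix.unitaryGroup (Fin dB) ℂ,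
        ‖Matrix.trace (((U : Matrix (Fin dA) (Fin dA) ℂ)ᴴ ⊗ₖ
          (V : Matrix (Fin dB) (Fin dB) ℂ)) * (∑ i, (p i : ℂ) • ρ i))‖) ≤
      ∑ i, p i * g i U := by
    intro U
    apply ciSup_le
    intro V
    have htr : Matrix.trace (((U : Matrix (Fin dA) (Fin dA) ℂ)ᴴ ⊗ₖ
        (V : Matrix (Fin dB) (Fin dB) ℂ)) * (∑ i, (p i : ℂ) • ρ i)) =
        ∑ i, (p i : ℂ) • Matrix.trace (((U : Matrix (Fin dA) (Fin dA) ℂ)ᴴ ⊗ₖ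
          (V : Matrix (Fin dB) (Fin dB) ℂ)) * ρ i) := by
      rw [Finset.mul_sum, Matrix.trace_sum]
      congr 1
      ext i
      rw [mul_smul_comm, Matrix.trace_smul]
    rw [htr]
    refine le_trans (norm_sum_le _ _) ?_
    apply Finset.sum_le_sum
    intro i _
    rw [norm_smul, Complex.norm_real, Real.norm_of_nonneg (hp i)]
    refine mul_le_mul_of_nonneg_left ?_ (hp i)
    have hb : BddAbove (Set.range fun V : Matrix.unitaryGroup (Fin dB) ℂ =>
        ‖Matrix.trace (((U : Matrix (Fin dA) (Fin dA) ℂ)ᴴ ⊗ₖ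
          (V : Matrix (Fin dB) (Fin dB) ℂ)) * ρ i)‖) := by
      exact bdd_slice (ρ i) U
    exact le_ciSup hb V
  calc (∫ U : Matrix.unitaryGroup (Fin dA) ℂ,
        (⨆ V : Matrix.unitaryGroup (Fin dB) ℂ,
          ‖Matrix.trace (((U : Matrix (Fin dA) (Fin dA) ℂ)ᴴ ⊗ₖ
            (V : Matrix (Fin dB) (Fin dB) ℂ)) * (∑ i, (p i : ℂ) • ρ i))‖) ∂μ)
      ≤ ∫ U, (∑ i, p i * g i U) ∂μ := by
        apply integral_mono_of_nonneg
        · filter_upwards with U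
          exact Real.iSup_nonneg fun V => norm_nonneg _
        · exact integrable_finset_sum _ fun i _ => (hgint i).const_mul (p i)
        · filter_upwards with U
          exact hpt U
    _ = ∑ i, p i * ∫ U, g i U ∂μ := by
        rw [integral_finset_sum _ fun i _ => (hgint i).const_mul (p i)]
        exact Finset.sum_congr rfl fun i _ => integral_const_mul _ _
end
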